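/- Let H be a quasi-Hopf algebra, Q = H/I a quotient quasibialgebra with finite-dimensional Q, and ν: H → Q the projection. Define φ̄: Q⊗Q → Q⊗Q by p⊗q ↦ p·ν(S(φ⁻¹⁽¹⁾)αφ⁻¹⁽²⁾)·q₍₁₎ ⊗ q₍₂₎. Then (ν⊗ν)∘φ = φ̄∘(ν⊗ν), where φ: H⊗H → H⊗H is Drinfeld's canonical map g⊗h ↦ gS(φ⁻¹⁽¹⁾)αφ⁻¹⁽²⁾h₍₁₎ ⊗ φ⁻¹⁽³⁾h₍₂₎; consequently φ̄ is surjective, hence bijective. -/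

import Mathlib

open TensorProduct LinearMap
set_option synthInstance.maxHeartbeats 400000
set_option maxHeartbeats 1000000

/-- A quasibialgebra over a field `k`. -/
structure QuasiBialgebra (k : Type*) [Field k] (H : Type*) [Ring H] [Algebra k H] where
  comul : H →ₐ[k] H ⊗[k] H
  counit : H →ₐ[k] k
  assoc : H ⊗[k] (H ⊗[k] H)
  assocInv : H ⊗[k] (H ⊗[k] H)
  assoc_mul_inv : assoc * assocInv = 1
  inv_mul_assoc : assocInv * assoc = 1
  counit_comul_left : ∀ h : H,
    (TensorProduct.lid k H) ((LinearMap.rTensor H counit.toLinearMap) (comul h)) = h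
  counit_comul_right : ∀ h : H,
    (TensorProduct.rid k H) ((LinearMap.lTensor H counit.toLinearMap) (comul h)) = h
  quasi_coassoc : ∀ h : H,
    (Algebra.TensorProduct.map (AlgHom.id k H) comul) (comul h) * assoc
      = assoc * (Algebra.TensorProduct.assoc k k k H H H)
          ((Algebra.TensorProduct.map comul (AlgHom.id k H)) (comul h))
  pentagon :
    (Algebra.TensorProduct.map (AlgHom.id k H)
        (Algebra.TensorProduct.map (AlgHom.id k H) comul)) assoc
      * (Algebra.TensorProduct.assoc k k k H H (H ⊗[k] H))
          ((Algebra.TensorProduct.map comul (AlgHom.id k (H ⊗[k] H))) assoc)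
    = (1 : H) ⊗ₜ[k] assoc
      * (Algebra.TensorProduct.map (AlgHom.id k H)
          ((Algebra.TensorProduct.assoc k k k H H H).toAlgHom.comp
            (Algebra.TensorProduct.map comul (AlgHom.id k H)))) assoc
      * (Algebra.TensorProduct.map (AlgHom.id k H)
          (Algebra.TensorProduct.assoc k k k H H H).toAlgHom)
          ((Algebra.TensorProduct.assoc k k k H (H ⊗[k] H) H) (assoc ⊗ₜ[k] (1 : H)))
  counit_mid :
    (Algebra.TensorProduct.map (AlgHom.id k H)
        ((Algebra.TensorProduct.lid k H).toAlgHom.comp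
          (Algebra.TensorProduct.map counit (AlgHom.id k H)))) assoc = 1

variable {k : Type*} [Field k] {H : Type*} [Ring H] [Algebra k H]

/-- The quasi-antipode axioms for a quasibialgebra. -/
structure IsQuasiAntipode (qb : QuasiBialgebra k H) (S : H →ₗ[k] H) (α β : H) : Prop where
  map_one : S 1 = 1
  map_mul : ∀ a b : H, S (a * b) = S b * S a
  antipode_left : ∀ h : H,
    LinearMap.mul' k H ((TensorProduct.map (LinearMap.mulRight k α ∘ₗ S) LinearMap.id)
      (qb.comul h)) = qb.counit h • α
  antipode_right : ∀ h : H,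
    LinearMap.mul' k H ((TensorProduct.map LinearMap.id (LinearMap.mulLeft k β ∘ₗ S))
      (qb.comul h)) = qb.counit h • β
  assoc_antipode :
    LinearMap.mul' k H ((TensorProduct.map (LinearMap.mulRight k β)
        (LinearMap.mul' k H ∘ₗ TensorProduct.map (LinearMap.mulRight k α ∘ₗ S) LinearMap.id))
      qb.assoc) = 1
  assocInv_antipode :
    LinearMap.mul' k H ((TensorProduct.map (LinearMap.mulRight k α ∘ₗ S)
        (LinearMap.mul' k H ∘ₗ TensorProduct.map (LinearMap.mulRight k β) S))
      qb.assocInv) = 1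

/-- A quasi-Hopf algebra. -/
structure QuasiHopf (k : Type*) [Field k] (H : Type*) [Ring H] [Algebra k H]
    extends QuasiBialgebra k H where
  antipode : H →ₗ[k] H
  alpha : H
  beta : H
  isQuasiAntipode : IsQuasiAntipode toQuasiBialgebra antipode alpha beta

/-- The element `w = Σ S(φ⁻¹⁽¹⁾)·α·φ⁻¹⁽²⁾ ⊗ φ⁻¹⁽³⁾` of `H ⊗ H`. -/
noncomputable def drinfeldW (qh : QuasiHopf k H) : H ⊗[k] H :=
  (LinearMap.rTensor H
      (LinearMap.mul' k H ∘ₗ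
        TensorProduct.map (LinearMap.mulRight k qh.alpha ∘ₗ qh.antipode) LinearMap.id))
    ((TensorProduct.assoc k H H H).symm qh.assocInv)

/-- Drinfeld's canonical map `g ⊗ h ↦ g·S(φ⁻¹⁽¹⁾)·α·φ⁻¹⁽²⁾·h₍₁₎ ⊗ φ⁻¹⁽³⁾·h₍₂₎`. -/
noncomputable def drinfeldCan (qh : QuasiHopf k H) : H ⊗[k] H →ₗ[k] H ⊗[k] H :=
  LinearMap.rTensor H (LinearMap.mul' k H)
    ∘ₗ (TensorProduct.assoc k H H H).symm.toLinearMap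
    ∘ₗ LinearMap.lTensor H (LinearMap.mulLeft k (drinfeldW qh) ∘ₗ qh.comul.toLinearMap)

/-- `h ↦ Σ φ⁽¹⁾·β·S(h₍₁₎·φ⁽²⁾) ⊗ h₍₂₎·φ⁽³⁾`. -/
noncomputable def drinfeldInvAux (qh : QuasiHopf k H) : H →ₗ[k] H ⊗[k] H :=
  LinearMap.rTensor H
      (LinearMap.mul' k H ∘ₗ TensorProduct.map (LinearMap.mulRight k qh.beta) qh.antipode)
    ∘ₗ (TensorProduct.assoc k H H H).symm.toLinearMap
    ∘ₗ LinearMap.mulRight k qh.assoc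
    ∘ₗ (TensorProduct.mk k H (H ⊗[k] H)) 1
    ∘ₗ qh.comul.toLinearMap

/-- The inverse of Drinfeld's canonical map:
`g ⊗ h ↦ g·φ⁽¹⁾·β·S(h₍₁₎·φ⁽²⁾) ⊗ h₍₂₎·φ⁽³⁾`. -/
noncomputable def drinfeldCanInv (qh : QuasiHopf k H) : H ⊗[k] H →ₗ[k] H ⊗[k] H :=
  LinearMap.rTensor H (LinearMap.mul' k H)
    ∘ₗ (TensorProduct.assoc k H H H).symm.toLinearMap
    ∘ₗ LinearMap.lTensor H (drinfeldInvAux qh)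

variable {Q : Type*} [Ring Q] [Algebra k Q]

/-- The map `φ̄ : Q⊗Q → Q⊗Q` induced on the quotient by Drinfeld's canonical map. -/
noncomputable def quotCan (qh : QuasiHopf k H) (ν : H →ₐ[k] Q) (comulQ : Q →ₐ[k] Q ⊗[k] Q) :
    Q ⊗[k] Q →ₗ[k] Q ⊗[k] Q :=
  LinearMap.rTensor Q (LinearMap.mul' k Q)
    ∘ₗ (TensorProduct.assoc k Q Q Q).symm.toLinearMap
    ∘ₗ LinearMap.lTensor Q
        (LinearMap.mulLeft k ((Algebra.TensorProduct.map ν ν) (drinfeldW qh))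
          ∘ₗ comulQ.toLinearMap)


section Aux
variable {A : Type*} [Ring A] [Algebra k A]

lemma fold_mul (g : A) (m : A ⊗[k] A) :
    LinearMap.rTensor A (LinearMap.mul' k A) ((TensorProduct.assoc k A A A).symm (g ⊗ₜ[k] m))
      = (g ⊗ₜ[k] (1:A)) * m := by
  induction m using TensorProduct.induction_on with
  | zero => rw [tmul_zero, (TensorProduct.assoc k A A A).symm.map_zero, map_zero, mul_zero]
  | tmul p q => simp [Algebra.TensorProduct.tmul_mul_tmul]
  | add u v hu hv => rw [tmul_add, (TensorProduct.assoc k A A A).symm.map_add, map_add, hu, hv, mul_add]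

end Aux

noncomputable def incL : H →ₗ[k] H ⊗[k] H := (TensorProduct.mk k H H).flip 1

@[simp] lemma incL_apply (a : H) : (incL (k := k)) a = a ⊗ₜ[k] (1:H) := rfl

noncomputable def gMap (S' : H →ₗ[k] H) (α' : H) : H ⊗[k] (H ⊗[k] H) →ₗ[k] H ⊗[k] H :=
  LinearMap.rTensor H (LinearMap.mul' k H ∘ₗ
      TensorProduct.map (LinearMap.mulRight k α' ∘ₗ S') LinearMap.id) ∘ₗ
    (TensorProduct.assoc k H H H).symm.toLinearMap

@[simp] lemma gMap_tmul (S' : H →ₗ[k] H) (α' : H) (a b c : H) :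
    gMap S' α' (a ⊗ₜ[k] (b ⊗ₜ[k] c)) = (S' a * α' * b) ⊗ₜ[k] c := by
  simp [gMap, mul_assoc]

lemma drinfeldW_eq (qh : QuasiHopf k H) :
    drinfeldW qh = gMap qh.antipode qh.alpha qh.assocInv := rfl

noncomputable def bMap (S' : H →ₗ[k] H) (w' : H ⊗[k] H) :
    H ⊗[k] (H ⊗[k] H) →ₗ[k] H ⊗[k] H :=
  TensorProduct.lift ((LinearMap.mul k (H ⊗[k] H)) ∘ₗ LinearMap.mulRight k w' ∘ₗ incL ∘ₗ S')

@[simp] lemma bMap_tmul (S' : H →ₗ[k] H) (w' : H ⊗[k] H) (a : H) (m : H ⊗[k] H) :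
    bMap S' w' (a ⊗ₜ[k] m) = ((S' a ⊗ₜ[k] (1:H)) * w') * m := by
  simp [bMap]

section QH
variable (qh : QuasiHopf k H)

lemma drinfeldCan_tmul (g h : H) :
    drinfeldCan qh (g ⊗ₜ[k] h) = (g ⊗ₜ[k] (1:H)) * (drinfeldW qh * qh.comul h) := by
  rw [drinfeldCan]
  simp only [LinearMap.comp_apply, LinearMap.lTensor_tmul, LinearMap.comp_apply]
  rw [← fold_mul]
  rfl

lemma drinfeldInvAux_eq (h : H) :
    drinfeldInvAux qh h
      = (LinearMap.rTensor H (LinearMap.mul' k H ∘ₗ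
            TensorProduct.map (LinearMap.mulRight k qh.beta) qh.antipode)
          ∘ₗ (TensorProduct.assoc k H H H).symm.toLinearMap)
        (((1:H) ⊗ₜ[k] qh.comul h) * qh.assoc) := rfl

noncomputable def pMap (qh : QuasiHopf k H) : H ⊗[k] (H ⊗[k] H) →ₗ[k] H ⊗[k] H :=
  LinearMap.rTensor H (LinearMap.mul' k H ∘ₗ
      TensorProduct.map (LinearMap.mulRight k qh.beta) qh.antipode) ∘ₗ
    (TensorProduct.assoc k H H H).symm.toLinearMap

@[simp] lemma pMap_tmul (a b c : H) :
    pMap qh (a ⊗ₜ[k] (b ⊗ₜ[k] c)) = (a * qh.beta * qh.antipode b) ⊗ₜ[k] c := by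
  simp [pMap, mul_assoc]

lemma drinfeldInvAux_eq' (h : H) :
    drinfeldInvAux qh h = pMap qh (((1:H) ⊗ₜ[k] qh.comul h) * qh.assoc) := rfl

lemma drinfeldCanInv_tmul (g h : H) :
    drinfeldCanInv qh (g ⊗ₜ[k] h) = (g ⊗ₜ[k] (1:H)) * drinfeldInvAux qh h := by
  rw [drinfeldCanInv]
  simp only [LinearMap.comp_apply, LinearMap.lTensor_tmul]
  rw [← fold_mul]
  rfl

end QH

section StepA
variable (S' : H →ₗ[k] H) (α' : H)

lemma gMap_tmul' (q : H) (n : H ⊗[k] H) :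
    gMap S' α' (q ⊗ₜ[k] n) = ((S' q * α') ⊗ₜ[k] (1:H)) * n := by
  induction n using TensorProduct.induction_on with
  | zero => rw [tmul_zero, map_zero, mul_zero]
  | tmul b c => simp [Algebra.TensorProduct.tmul_mul_tmul]
  | add u v hu hv => rw [tmul_add, map_add, hu, hv, mul_add]

variable (hS : ∀ a b : H, S' (a * b) = S' b * S' a)
include hS

lemma gMap_mul (x' t : H ⊗[k] (H ⊗[k] H)) :
    gMap S' α' (x' * t) = bMap S' (gMap S' α' x') t := by
  induction t using TensorProduct.induction_on with
  | zero => rw [mul_zero, map_zero, map_zero]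
  | add u v hu hv => rw [mul_add, map_add, map_add, hu, hv]
  | tmul a m =>
    rw [bMap_tmul]
    induction x' using TensorProduct.induction_on with
    | zero => simp
    | add u v hu hv => rw [add_mul, map_add, map_add, hu, hv, mul_add, add_mul]
    | tmul p n =>
      rw [Algebra.TensorProduct.tmul_mul_tmul, gMap_tmul', gMap_tmul', hS]
      rw [← mul_assoc (S' a ⊗ₜ[k] (1:H)), Algebra.TensorProduct.tmul_mul_tmul, one_mul,
        mul_assoc (S' a), mul_assoc]

end StepA

section StepA2
variable (S' : H →ₗ[k] H) (α' : H) (Δa : H →ₐ[k] H ⊗[k] H) (εa : H →ₐ[k] k)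

lemma stepA2i (hS : ∀ a b : H, S' (a * b) = S' b * S' a)
    (mu : H ⊗[k] H) (a v : H) (n : H ⊗[k] H) :
    gMap S' α' ((Algebra.TensorProduct.assoc k k k H H H) (mu ⊗ₜ[k] v) * (a ⊗ₜ[k] n))
      = ((S' a) ⊗ₜ[k] (1:H)) *
          (((LinearMap.mul' k H) ((TensorProduct.map (LinearMap.mulRight k α' ∘ₗ S')
              LinearMap.id) mu)) ⊗ₜ[k] v) * n := by
  induction mu using TensorProduct.induction_on with
  | zero => simp
  | add u' v' hu hv =>
    rw [add_tmul, map_add, add_mul, map_add, map_add, map_add, hu, hv, add_tmul, mul_add,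
      add_mul]
  | tmul p q =>
    rw [Algebra.TensorProduct.assoc_tmul, Algebra.TensorProduct.tmul_mul_tmul, gMap_tmul', hS]
    simp only [TensorProduct.map_tmul, LinearMap.mul'_apply, LinearMap.comp_apply,
      LinearMap.mulRight_apply, LinearMap.id_apply]
    rw [← mul_assoc, Algebra.TensorProduct.tmul_mul_tmul, Algebra.TensorProduct.tmul_mul_tmul]
    simp only [one_mul, mul_assoc]

lemma stepA2 (hS : ∀ a b : H, S' (a * b) = S' b * S' a)
    (hαS : ∀ u : H, (LinearMap.mul' k H) ((TensorProduct.map (LinearMap.mulRight k α' ∘ₗ S')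
        LinearMap.id) (Δa u)) = εa u • α')
    (x' : H ⊗[k] (H ⊗[k] H)) (m : H ⊗[k] H) :
    gMap S' α' ((Algebra.TensorProduct.assoc k k k H H H)
        ((Algebra.TensorProduct.map Δa (AlgHom.id k H)) m) * x')
      = ((1:H) ⊗ₜ[k] ((TensorProduct.lid k H) ((LinearMap.rTensor H εa.toLinearMap) m)))
          * gMap S' α' x' := by
  induction m using TensorProduct.induction_on with
  | zero => simp
  | add u' v' hu hv => rw [map_add, map_add, add_mul, map_add, hu, hv, map_add, map_add,
      tmul_add, add_mul]
  | tmul u v =>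
    rw [Algebra.TensorProduct.map_tmul, AlgHom.coe_id, id_eq]
    induction x' using TensorProduct.induction_on with
    | zero => simp
    | add s t hs ht => rw [mul_add, map_add, map_add, hs, ht, mul_add]
    | tmul a n =>
      rw [stepA2i S' α' hS, hαS u, gMap_tmul']
      simp only [LinearMap.rTensor_tmul, AlgHom.toLinearMap_apply, TensorProduct.lid_tmul]
      rw [← TensorProduct.smul_tmul', TensorProduct.tmul_smul, mul_smul_comm, smul_mul_assoc,
        smul_mul_assoc]
      congr 1
      rw [Algebra.TensorProduct.tmul_mul_tmul, ← mul_assoc,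
        Algebra.TensorProduct.tmul_mul_tmul]
      simp only [one_mul, mul_one]

end StepA2

section IW
variable (qh : QuasiHopf k H)

lemma iw (h : H) :
    bMap qh.antipode (drinfeldW qh)
        ((Algebra.TensorProduct.map (AlgHom.id k H) qh.comul) (qh.comul h))
      = ((1:H) ⊗ₜ[k] h) * drinfeldW qh := by
  have hS := qh.isQuasiAntipode.map_mul
  set L := (Algebra.TensorProduct.map (AlgHom.id k H) qh.comul) (qh.comul h) with hL
  set R := (Algebra.TensorProduct.assoc k k k H H H)
      ((Algebra.TensorProduct.map qh.comul (AlgHom.id k H)) (qh.comul h)) with hR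
  have h1 : qh.assocInv * L = R * qh.assocInv := by
    calc qh.assocInv * L = qh.assocInv * ((L * qh.assoc) * qh.assocInv) := by
          rw [mul_assoc L, qh.assoc_mul_inv, mul_one]
      _ = qh.assocInv * ((qh.assoc * R) * qh.assocInv) := by rw [qh.quasi_coassoc h]
      _ = R * qh.assocInv := by
          rw [mul_assoc qh.assoc, ← mul_assoc qh.assocInv, qh.inv_mul_assoc, one_mul]
  rw [drinfeldW_eq, ← gMap_mul _ _ hS, h1,
    stepA2 qh.antipode qh.alpha qh.comul qh.counit hS qh.isQuasiAntipode.antipode_left,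
    qh.counit_comul_left]

end IW

section Counit
variable (qh : QuasiHopf k H)

noncomputable def e1A : H ⊗[k] (H ⊗[k] H) →ₐ[k] H ⊗[k] H :=
  ((Algebra.TensorProduct.lid k (H ⊗[k] H)).toAlgHom).comp
    (Algebra.TensorProduct.map qh.counit (AlgHom.id k (H ⊗[k] H)))

@[simp] lemma e1A_tmul (a : H) (m : H ⊗[k] H) :
    e1A qh (a ⊗ₜ[k] m) = qh.counit a • m := by
  simp [e1A]

noncomputable def fA : H ⊗[k] (H ⊗[k] (H ⊗[k] H)) →ₐ[k] H ⊗[k] H :=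
  (e1A qh).comp (((Algebra.TensorProduct.lid k (H ⊗[k] (H ⊗[k] H))).toAlgHom).comp
    (Algebra.TensorProduct.map qh.counit (AlgHom.id k (H ⊗[k] (H ⊗[k] H)))))

@[simp] lemma fA_tmul (a : H) (t : H ⊗[k] (H ⊗[k] H)) :
    fA qh (a ⊗ₜ[k] t) = qh.counit a • e1A qh t := by
  simp [fA]

noncomputable def ef2 : H ⊗[k] H →ₗ[k] H :=
  (TensorProduct.lid k H).toLinearMap ∘ₗ LinearMap.rTensor H qh.counit.toLinearMap

@[simp] lemma ef2_tmul (u v : H) : ef2 qh (u ⊗ₜ[k] v) = qh.counit u • v := by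
  simp [ef2]

lemma ef2_comul (h : H) : ef2 qh (qh.comul h) = h := qh.counit_comul_left h

lemma l0t1 (t : H ⊗[k] (H ⊗[k] H)) :
    fA qh ((Algebra.TensorProduct.map (AlgHom.id k H)
        (Algebra.TensorProduct.map (AlgHom.id k H) qh.comul)) t)
      = qh.comul (ef2 qh (e1A qh t)) := by
  induction t using TensorProduct.induction_on with
  | zero => simp
  | add u v hu hv => simp only [map_add, hu, hv]
  | tmul a m =>
    induction m using TensorProduct.induction_on with
    | zero => simp
    | add u v hu hv =>
      rw [tmul_add] at *
      simp only [map_add] at *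
      rw [hu, hv]
    | tmul b c =>
      simp [smul_smul, map_smul]

lemma l0t2 (mu m : H ⊗[k] H) :
    fA qh ((Algebra.TensorProduct.assoc k k k H H (H ⊗[k] H)) (mu ⊗ₜ[k] m))
      = qh.counit (ef2 qh mu) • m := by
  induction mu using TensorProduct.induction_on with
  | zero => simp
  | add u v hu hv => simp only [add_tmul, map_add, hu, hv, add_smul]
  | tmul u v => simp [smul_smul]

lemma l0t2' (t : H ⊗[k] (H ⊗[k] H)) :
    fA qh ((Algebra.TensorProduct.assoc k k k H H (H ⊗[k] H))
        ((Algebra.TensorProduct.map qh.comul (AlgHom.id k (H ⊗[k] H))) t))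
      = e1A qh t := by
  induction t using TensorProduct.induction_on with
  | zero => simp
  | add u v hu hv => simp only [map_add, hu, hv]
  | tmul a m => rw [Algebra.TensorProduct.map_tmul, l0t2, ef2_comul, AlgHom.coe_id, id_eq,
      e1A_tmul]

lemma l0t3 (t : H ⊗[k] (H ⊗[k] H)) :
    fA qh ((1:H) ⊗ₜ[k] t) = e1A qh t := by
  rw [fA_tmul, map_one, one_smul]

lemma l0t4i (m : H ⊗[k] H) :
    e1A qh ((Algebra.TensorProduct.assoc k k k H H H)
        ((Algebra.TensorProduct.map qh.comul (AlgHom.id k H)) m)) = m := by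
  induction m using TensorProduct.induction_on with
  | zero => simp
  | add u v hu hv => simp only [map_add, hu, hv]
  | tmul b c =>
    rw [Algebra.TensorProduct.map_tmul, AlgHom.coe_id, id_eq]
    have inner : ∀ mu : H ⊗[k] H,
        e1A qh ((Algebra.TensorProduct.assoc k k k H H H) (mu ⊗ₜ[k] c))
          = (ef2 qh mu) ⊗ₜ[k] c := by
      intro mu
      induction mu using TensorProduct.induction_on with
      | zero => simp
      | add u v hu hv => simp only [add_tmul, map_add, hu, hv]
      | tmul u v => simp [TensorProduct.smul_tmul']
    rw [inner, ef2_comul]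

lemma l0t4 (t : H ⊗[k] (H ⊗[k] H)) :
    fA qh ((Algebra.TensorProduct.map (AlgHom.id k H)
        ((Algebra.TensorProduct.assoc k k k H H H).toAlgHom.comp
          (Algebra.TensorProduct.map qh.comul (AlgHom.id k H)))) t)
      = e1A qh t := by
  induction t using TensorProduct.induction_on with
  | zero => simp
  | add u v hu hv => simp only [map_add, hu, hv]
  | tmul a m =>
    rw [Algebra.TensorProduct.map_tmul, AlgHom.coe_id, id_eq, fA_tmul, AlgHom.coe_comp,
      Function.comp_apply, AlgEquiv.toAlgHom_eq_coe, AlgEquiv.coe_toAlgHom]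
    rw [l0t4i, e1A_tmul]

lemma l0t5 (t : H ⊗[k] (H ⊗[k] H)) :
    fA qh ((Algebra.TensorProduct.map (AlgHom.id k H)
        (Algebra.TensorProduct.assoc k k k H H H).toAlgHom)
        ((Algebra.TensorProduct.assoc k k k H (H ⊗[k] H) H) (t ⊗ₜ[k] (1:H))))
      = (ef2 qh (e1A qh t)) ⊗ₜ[k] (1:H) := by
  induction t using TensorProduct.induction_on with
  | zero => simp
  | add u v hu hv => simp only [add_tmul, map_add, hu, hv]
  | tmul a m =>
    rw [Algebra.TensorProduct.assoc_tmul, Algebra.TensorProduct.map_tmul, AlgHom.coe_id, id_eq,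
      fA_tmul]
    have inner : ∀ m : H ⊗[k] H,
        e1A qh ((Algebra.TensorProduct.assoc k k k H H H).toAlgHom (m ⊗ₜ[k] (1:H)))
          = (ef2 qh m) ⊗ₜ[k] (1:H) := by
      intro m'
      induction m' using TensorProduct.induction_on with
      | zero => simp
      | add u v hu hv => simp only [add_tmul, map_add, hu, hv]
      | tmul b c => simp [TensorProduct.smul_tmul']
    rw [inner, e1A_tmul, map_smul, TensorProduct.smul_tmul']

lemma e11_assoc : ef2 qh (e1A qh qh.assoc) = 1 := by
  have key : ∀ t : H ⊗[k] (H ⊗[k] H),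
      ef2 qh (e1A qh t) = ef2 qh ((Algebra.TensorProduct.map (AlgHom.id k H)
        ((Algebra.TensorProduct.lid k H).toAlgHom.comp
          (Algebra.TensorProduct.map qh.counit (AlgHom.id k H)))) t) := by
    intro t
    induction t using TensorProduct.induction_on with
    | zero => simp
    | add u v hu hv => simp only [map_add, hu, hv]
    | tmul a m =>
      induction m using TensorProduct.induction_on with
      | zero => simp
      | add u v hu hv => simp only [tmul_add, map_add, hu, hv]
      | tmul b c => simp [smul_smul, mul_comm]
  rw [key, qh.counit_mid]
  rw [Algebra.TensorProduct.one_def, ef2_tmul, map_one, one_smul]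

lemma e1A_assoc : e1A qh qh.assoc = 1 := by
  have hp := congrArg (fA qh) qh.pentagon
  rw [map_mul, map_mul, map_mul, l0t1, l0t2', l0t3, l0t4, l0t5, e11_assoc, map_one] at hp
  rw [← Algebra.TensorProduct.one_def, one_mul, mul_one] at hp
  have inv1 : e1A qh qh.assoc * e1A qh qh.assocInv = 1 := by
    rw [← map_mul, qh.assoc_mul_inv, map_one]
  calc e1A qh qh.assoc = e1A qh qh.assoc * 1 := by rw [mul_one]
    _ = e1A qh qh.assoc * (e1A qh qh.assoc * e1A qh qh.assocInv) := by rw [inv1]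
    _ = (e1A qh qh.assoc * e1A qh qh.assoc) * e1A qh qh.assocInv := by rw [mul_assoc]
    _ = e1A qh qh.assoc * e1A qh qh.assocInv := by rw [← hp]
    _ = 1 := inv1

lemma e1A_assocInv : e1A qh qh.assocInv = 1 := by
  have inv2 : e1A qh qh.assocInv * e1A qh qh.assoc = 1 := by
    rw [← map_mul, qh.inv_mul_assoc, map_one]
  calc e1A qh qh.assocInv = e1A qh qh.assocInv * e1A qh qh.assoc := by
        rw [e1A_assoc, mul_one]
    _ = 1 := inv2

end Counit

section T4Helpers
lemma mul_add4 (a u v : H ⊗[k] (H ⊗[k] (H ⊗[k] H))) : a * (u + v) = a * u + a * v := by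
  have h := (LinearMap.mulLeft k a).map_add u v
  simpa using h

lemma mul_zero4 (a : H ⊗[k] (H ⊗[k] (H ⊗[k] H))) : a * 0 = 0 := by
  have h := (LinearMap.mulLeft k a).map_zero
  simpa using h

lemma add_mul4 (u v a : H ⊗[k] (H ⊗[k] (H ⊗[k] H))) : (u + v) * a = u * a + v * a := by
  have h := (LinearMap.mulRight k a).map_add u v
  simpa using h

lemma zero_mul4 (a : H ⊗[k] (H ⊗[k] (H ⊗[k] H))) : 0 * a = 0 := by
  have h := (LinearMap.mulRight k a).map_zero
  simpa using h
end T4Helpers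

section Mext
variable (qh : QuasiHopf k H)

noncomputable def mext (w' : H ⊗[k] H) :
    H ⊗[k] (H ⊗[k] (H ⊗[k] H)) →ₗ[k] H ⊗[k] H :=
  TensorProduct.lift ((LinearMap.mul k (H ⊗[k] H)) ∘ₗ incL ∘ₗ LinearMap.mulRight k qh.beta)
    ∘ₗ LinearMap.lTensor H (bMap qh.antipode w')

@[simp] lemma mext_tmul (w' : H ⊗[k] H) (p : H) (t : H ⊗[k] (H ⊗[k] H)) :
    mext qh w' (p ⊗ₜ[k] t) = ((p * qh.beta) ⊗ₜ[k] (1:H)) * bMap qh.antipode w' t := by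
  simp [mext]

noncomputable def mext' : H ⊗[k] (H ⊗[k] (H ⊗[k] H)) →ₗ[k] H ⊗[k] H :=
  TensorProduct.lift ((LinearMap.mul k (H ⊗[k] H)) ∘ₗ incL ∘ₗ LinearMap.mulRight k qh.beta)
    ∘ₗ LinearMap.lTensor H (gMap qh.antipode qh.alpha)

@[simp] lemma mext'_tmul (p : H) (t : H ⊗[k] (H ⊗[k] H)) :
    mext' qh (p ⊗ₜ[k] t) = ((p * qh.beta) ⊗ₜ[k] (1:H)) * gMap qh.antipode qh.alpha t := by
  simp [mext']

lemma cm (t : H ⊗[k] (H ⊗[k] H)) :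
    drinfeldCan qh (pMap qh t)
      = mext qh (drinfeldW qh) ((Algebra.TensorProduct.map (AlgHom.id k H)
          (Algebra.TensorProduct.map (AlgHom.id k H) qh.comul)) t) := by
  induction t using TensorProduct.induction_on with
  | zero => simp
  | add u v hu hv => simp only [map_add, hu, hv]
  | tmul a m =>
    induction m using TensorProduct.induction_on with
    | zero => simp [tmul_zero]
    | add u v hu hv => simp only [tmul_add, map_add, hu, hv]
    | tmul b c =>
      rw [pMap_tmul, drinfeldCan_tmul]
      simp only [Algebra.TensorProduct.map_tmul, AlgHom.coe_id, id_eq, mext_tmul, bMap_tmul]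
      simp only [← mul_assoc, Algebra.TensorProduct.tmul_mul_tmul, mul_one]

lemma chpp (w' : H ⊗[k] H) (s : H ⊗[k] (H ⊗[k] H)) (p q : H) (n : H ⊗[k] H) :
    mext qh w' (p ⊗ₜ[k] (s * (q ⊗ₜ[k] n)))
      = ((p * qh.beta) ⊗ₜ[k] (1:H)) * (((qh.antipode q) ⊗ₜ[k] (1:H)) *
          ((bMap qh.antipode w' s) * n)) := by
  induction s using TensorProduct.induction_on with
  | zero => rw [zero_mul, tmul_zero, map_zero, map_zero, zero_mul, mul_zero, mul_zero]
  | add u v hu hv => simp only [add_mul, tmul_add, map_add, hu, hv, mul_add]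
  | tmul u vp =>
    rw [Algebra.TensorProduct.tmul_mul_tmul, mext_tmul, bMap_tmul, bMap_tmul,
      qh.isQuasiAntipode.map_mul]
    simp only [← mul_assoc, Algebra.TensorProduct.tmul_mul_tmul, mul_one]

lemma bw_assoc : bMap qh.antipode (drinfeldW qh) qh.assoc = qh.alpha ⊗ₜ[k] (1:H) := by
  rw [drinfeldW_eq, ← gMap_mul _ _ qh.isQuasiAntipode.map_mul, qh.inv_mul_assoc]
  rw [show (1 : H ⊗[k] (H ⊗[k] H)) = (1:H) ⊗ₜ[k] ((1:H) ⊗ₜ[k] (1:H)) by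
    rw [← Algebra.TensorProduct.one_def, ← Algebra.TensorProduct.one_def]]
  rw [gMap_tmul, qh.isQuasiAntipode.map_one, one_mul, mul_one]

lemma ca (r : H ⊗[k] (H ⊗[k] (H ⊗[k] H))) :
    mext qh (drinfeldW qh) (((1:H) ⊗ₜ[k] qh.assoc) * r) = mext' qh r := by
  induction r using TensorProduct.induction_on with
  | zero => rw [mul_zero4, map_zero, map_zero]
  | add u v hu hv => rw [mul_add4, map_add, map_add, hu, hv]
  | tmul p t =>
    rw [Algebra.TensorProduct.tmul_mul_tmul, one_mul, mext'_tmul]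
    induction t using TensorProduct.induction_on with
    | zero => simp only [mul_zero, tmul_zero, map_zero, mul_zero]
    | add u v hu hv => simp only [mul_add, tmul_add, map_add, hu, hv]
    | tmul q n =>
      rw [chpp, bw_assoc, gMap_tmul']
      simp only [← mul_assoc, Algebra.TensorProduct.tmul_mul_tmul, mul_one]

lemma chp (h : H) (r : H ⊗[k] (H ⊗[k] (H ⊗[k] H))) :
    mext qh (drinfeldW qh) (((1:H) ⊗ₜ[k] ((Algebra.TensorProduct.map (AlgHom.id k H)
          qh.comul) (qh.comul h))) * r)
      = ((1:H) ⊗ₜ[k] h) * mext qh (drinfeldW qh) r := by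
  induction r using TensorProduct.induction_on with
  | zero => simp only [mul_zero4, map_zero, mul_zero]
  | add u v hu hv => rw [mul_add4, map_add, map_add, hu, hv, mul_add]
  | tmul p t =>
    rw [Algebra.TensorProduct.tmul_mul_tmul, one_mul]
    induction t using TensorProduct.induction_on with
    | zero => simp only [mul_zero, tmul_zero, map_zero, mul_zero]
    | add u v hu hv => simp only [mul_add, tmul_add, map_add, hu, hv]
    | tmul q n =>
      rw [chpp, iw, mext_tmul, bMap_tmul]
      simp only [← mul_assoc]
      simp only [Algebra.TensorProduct.tmul_mul_tmul, one_mul, mul_one]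

end Mext

lemma mul_assoc4 (a b c : H ⊗[k] (H ⊗[k] (H ⊗[k] H))) : a * b * c = a * (b * c) :=
  mul_assoc a b c

section CB
variable (qh : QuasiHopf k H)

noncomputable def lamMap (z₁ z₂ : H) (n : H ⊗[k] H) : H ⊗[k] H →ₗ[k] H ⊗[k] H :=
  TensorProduct.lift (LinearMap.mk₂ k
    (fun U W => ((U * z₁) ⊗ₜ[k] (1:H)) * ((z₂ ⊗ₜ[k] W) * n))
    (by intro m₁ m₂ W; rw [add_mul, add_tmul, add_mul])
    (by intro c m W; rw [smul_mul_assoc, ← TensorProduct.smul_tmul', smul_mul_assoc])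
    (by intro m W₁ W₂; rw [tmul_add, add_mul, mul_add])
    (by intro c m W; rw [tmul_smul, smul_mul_assoc, mul_smul_comm]))

@[simp] lemma lamMap_tmul (z₁ z₂ : H) (n : H ⊗[k] H) (U W : H) :
    lamMap z₁ z₂ n (U ⊗ₜ[k] W) = ((U * z₁) ⊗ₜ[k] (1:H)) * ((z₂ ⊗ₜ[k] W) * n) := by
  simp [lamMap]

lemma cbii (mv : H ⊗[k] H) (U' W q : H) (n : H ⊗[k] H) :
    mext' qh (U' ⊗ₜ[k] (((Algebra.TensorProduct.assoc k k k H H H) (mv ⊗ₜ[k] W)) * (q ⊗ₜ[k] n)))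
      = ((U' * qh.beta) ⊗ₜ[k] (1:H)) *
          (((qh.antipode q * (LinearMap.mul' k H ((TensorProduct.map
              (LinearMap.mulRight k qh.alpha ∘ₗ qh.antipode) LinearMap.id) mv))) ⊗ₜ[k] W)
            * n) := by
  induction mv using TensorProduct.induction_on with
  | zero => simp only [zero_tmul, map_zero, zero_mul, tmul_zero, map_zero, mul_zero,
      zero_tmul, zero_mul, mul_zero]
  | add u v hu hv => simp only [add_tmul, map_add, add_mul, tmul_add, hu, hv, mul_add]
  | tmul v₁ v₂ =>
    rw [Algebra.TensorProduct.assoc_tmul, Algebra.TensorProduct.tmul_mul_tmul, mext'_tmul,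
      gMap_tmul', qh.isQuasiAntipode.map_mul]
    simp only [TensorProduct.map_tmul, LinearMap.mul'_apply, LinearMap.comp_apply,
      LinearMap.mulRight_apply, LinearMap.id_apply]
    simp only [← mul_assoc, Algebra.TensorProduct.tmul_mul_tmul, mul_one, one_mul]

lemma cbi (n' : H ⊗[k] (H ⊗[k] H)) (p q : H) (n : H ⊗[k] H) :
    mext' qh (((Algebra.TensorProduct.map (AlgHom.id k H)
          ((Algebra.TensorProduct.assoc k k k H H H).toAlgHom.comp
            (Algebra.TensorProduct.map qh.comul (AlgHom.id k H)))) n')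
        * (p ⊗ₜ[k] (q ⊗ₜ[k] n)))
      = lamMap (p * qh.beta) (qh.antipode q * qh.alpha) n
          ((Algebra.TensorProduct.map (AlgHom.id k H)
            ((Algebra.TensorProduct.lid k H).toAlgHom.comp
              (Algebra.TensorProduct.map qh.counit (AlgHom.id k H)))) n') := by
  induction n' using TensorProduct.induction_on with
  | zero => simp only [map_zero, zero_mul]
  | add u v hu hv => simp only [map_add, add_mul4, hu, hv]
  | tmul U m2 =>
    rw [Algebra.TensorProduct.map_tmul, Algebra.TensorProduct.map_tmul, AlgHom.coe_id, id_eq,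
      Algebra.TensorProduct.tmul_mul_tmul]
    induction m2 using TensorProduct.induction_on with
    | zero => simp only [map_zero, zero_mul, tmul_zero, map_zero]
    | add u v hu hv => simp only [map_add, add_mul, tmul_add, hu, hv]
    | tmul V W =>
      rw [AlgHom.coe_comp, Function.comp_apply, Algebra.TensorProduct.map_tmul,
        AlgHom.coe_id, id_eq, AlgEquiv.toAlgHom_eq_coe, AlgEquiv.coe_toAlgHom]
      rw [cbii, qh.isQuasiAntipode.antipode_left]
      rw [AlgHom.coe_comp, Function.comp_apply, Algebra.TensorProduct.map_tmul,
        AlgHom.coe_id, id_eq, AlgEquiv.toAlgHom_eq_coe, AlgEquiv.coe_toAlgHom,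
        Algebra.TensorProduct.lid_tmul]
      rw [tmul_smul, map_smul, lamMap_tmul]
      rw [mul_smul_comm, ← TensorProduct.smul_tmul', smul_mul_assoc, mul_smul_comm]
      simp only [mul_assoc]

lemma cb (r : H ⊗[k] (H ⊗[k] (H ⊗[k] H))) :
    mext' qh (((Algebra.TensorProduct.map (AlgHom.id k H)
          ((Algebra.TensorProduct.assoc k k k H H H).toAlgHom.comp
            (Algebra.TensorProduct.map qh.comul (AlgHom.id k H)))) qh.assoc) * r)
      = mext' qh r := by
  induction r using TensorProduct.induction_on with
  | zero => rw [mul_zero4, map_zero]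
  | add u v hu hv => rw [mul_add4, map_add, hu, hv, map_add]
  | tmul p t =>
    induction t using TensorProduct.induction_on with
    | zero => simp only [tmul_zero, mul_zero4, map_zero]
    | add u v hu hv => simp only [tmul_add, mul_add4, map_add, hu, hv]
    | tmul q n =>
      rw [cbi, qh.counit_mid, Algebra.TensorProduct.one_def, lamMap_tmul, one_mul,
        mext'_tmul, gMap_tmul']

end CB

section CC
variable (qh : QuasiHopf k H)

lemma cca (mu m : H ⊗[k] H) (A B C : H) :
    mext' qh ((A ⊗ₜ[k] (B ⊗ₜ[k] (C ⊗ₜ[k] (1:H)))) *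
        ((Algebra.TensorProduct.assoc k k k H H (H ⊗[k] H)) (mu ⊗ₜ[k] m)))
      = ((A * (LinearMap.mul' k H ((TensorProduct.map LinearMap.id
            (LinearMap.mulLeft k qh.beta ∘ₗ qh.antipode)) mu))
          * (qh.antipode B * qh.alpha * C)) ⊗ₜ[k] (1:H)) * m := by
  induction mu using TensorProduct.induction_on with
  | zero => simp only [zero_tmul, map_zero, mul_zero4, map_zero, mul_zero, zero_mul,
      zero_tmul, zero_mul]
  | add u v hu hv => simp only [add_tmul, map_add, mul_add4, mul_add, add_mul, hu, hv,
      add_tmul]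
  | tmul u₁ u₂ =>
    rw [Algebra.TensorProduct.assoc_tmul, Algebra.TensorProduct.tmul_mul_tmul,
      Algebra.TensorProduct.tmul_mul_tmul, mext'_tmul, gMap_tmul',
      qh.isQuasiAntipode.map_mul]
    simp only [TensorProduct.map_tmul, LinearMap.mul'_apply, LinearMap.comp_apply,
      LinearMap.mulLeft_apply, LinearMap.id_apply]
    simp only [← mul_assoc, Algebra.TensorProduct.tmul_mul_tmul, mul_one, one_mul]

lemma ccb (n' : H ⊗[k] (H ⊗[k] H)) (u : H) (m : H ⊗[k] H) :
    mext' qh (((Algebra.TensorProduct.map (AlgHom.id k H)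
            (Algebra.TensorProduct.assoc k k k H H H).toAlgHom)
          ((Algebra.TensorProduct.assoc k k k H (H ⊗[k] H) H) (n' ⊗ₜ[k] (1:H))))
        * ((Algebra.TensorProduct.assoc k k k H H (H ⊗[k] H)) ((qh.comul u) ⊗ₜ[k] m)))
      = qh.counit u •
          (((LinearMap.mul' k H ((TensorProduct.map (LinearMap.mulRight k qh.beta)
              (LinearMap.mul' k H ∘ₗ TensorProduct.map
                (LinearMap.mulRight k qh.alpha ∘ₗ qh.antipode) LinearMap.id)) n'))
            ⊗ₜ[k] (1:H)) * m) := by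
  induction n' using TensorProduct.induction_on with
  | zero => simp only [zero_tmul, map_zero, zero_mul, map_zero, smul_zero, zero_tmul,
      zero_mul]
  | add x y hx hy => simp only [add_tmul, map_add, add_mul4, hx, hy, add_mul, smul_add]
  | tmul A m3 =>
    rw [Algebra.TensorProduct.assoc_tmul, Algebra.TensorProduct.map_tmul, AlgHom.coe_id,
      id_eq]
    induction m3 using TensorProduct.induction_on with
    | zero => simp only [map_zero, tmul_zero, zero_tmul, map_zero, mul_zero, zero_mul,
        smul_zero, zero_mul4]
    | add x y hx hy => simp only [tmul_add, add_tmul, map_add, mul_add, add_mul4, hx, hy,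
        add_mul, smul_add]
    | tmul B C =>
      rw [AlgEquiv.toAlgHom_eq_coe, AlgEquiv.coe_toAlgHom, Algebra.TensorProduct.assoc_tmul]
      rw [cca, qh.isQuasiAntipode.antipode_right]
      simp only [TensorProduct.map_tmul, LinearMap.mul'_apply, LinearMap.comp_apply,
        LinearMap.mulRight_apply, LinearMap.id_apply]
      rw [mul_smul_comm, smul_mul_assoc, ← TensorProduct.smul_tmul', smul_mul_assoc]
      try simp only [mul_assoc]

lemma cc (t : H ⊗[k] (H ⊗[k] H)) :
    mext' qh (((Algebra.TensorProduct.map (AlgHom.id k H)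
            (Algebra.TensorProduct.assoc k k k H H H).toAlgHom)
          ((Algebra.TensorProduct.assoc k k k H (H ⊗[k] H) H) (qh.assoc ⊗ₜ[k] (1:H))))
        * ((Algebra.TensorProduct.assoc k k k H H (H ⊗[k] H))
            ((Algebra.TensorProduct.map qh.comul (AlgHom.id k (H ⊗[k] H))) t)))
      = e1A qh t := by
  induction t using TensorProduct.induction_on with
  | zero => simp only [map_zero, mul_zero4, map_zero]
  | add x y hx hy => simp only [map_add, mul_add4, hx, hy]
  | tmul u m =>
    rw [Algebra.TensorProduct.map_tmul, AlgHom.coe_id, id_eq, ccb,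
      qh.isQuasiAntipode.assoc_antipode, ← Algebra.TensorProduct.one_def, one_mul,
      e1A_tmul]
end CC

section Final
variable (qh : QuasiHopf k H)

lemma mextD3 :
    mext qh (drinfeldW qh) ((Algebra.TensorProduct.map (AlgHom.id k H)
      (Algebra.TensorProduct.map (AlgHom.id k H) qh.comul)) qh.assoc) = 1 := by
  have hinv : (Algebra.TensorProduct.assoc k k k H H (H ⊗[k] H))
        ((Algebra.TensorProduct.map qh.comul (AlgHom.id k (H ⊗[k] H))) qh.assoc)
      * (Algebra.TensorProduct.assoc k k k H H (H ⊗[k] H))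
        ((Algebra.TensorProduct.map qh.comul (AlgHom.id k (H ⊗[k] H))) qh.assocInv) = 1 := by
    rw [← map_mul, ← map_mul, qh.assoc_mul_inv, map_one, map_one]
  have hD3 : (Algebra.TensorProduct.map (AlgHom.id k H)
        (Algebra.TensorProduct.map (AlgHom.id k H) qh.comul)) qh.assoc
      = (1:H) ⊗ₜ[k] qh.assoc
        * ((Algebra.TensorProduct.map (AlgHom.id k H)
            ((Algebra.TensorProduct.assoc k k k H H H).toAlgHom.comp
              (Algebra.TensorProduct.map qh.comul (AlgHom.id k H)))) qh.assoc
          * ((Algebra.TensorProduct.map (AlgHom.id k H)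
              (Algebra.TensorProduct.assoc k k k H H H).toAlgHom)
              ((Algebra.TensorProduct.assoc k k k H (H ⊗[k] H) H) (qh.assoc ⊗ₜ[k] (1:H)))
            * (Algebra.TensorProduct.assoc k k k H H (H ⊗[k] H))
              ((Algebra.TensorProduct.map qh.comul (AlgHom.id k (H ⊗[k] H)))
                qh.assocInv))) := by
    calc (Algebra.TensorProduct.map (AlgHom.id k H)
          (Algebra.TensorProduct.map (AlgHom.id k H) qh.comul)) qh.assoc
        = (Algebra.TensorProduct.map (AlgHom.id k H)
            (Algebra.TensorProduct.map (AlgHom.id k H) qh.comul)) qh.assoc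
          * ((Algebra.TensorProduct.assoc k k k H H (H ⊗[k] H))
              ((Algebra.TensorProduct.map qh.comul (AlgHom.id k (H ⊗[k] H))) qh.assoc)
            * (Algebra.TensorProduct.assoc k k k H H (H ⊗[k] H))
              ((Algebra.TensorProduct.map qh.comul (AlgHom.id k (H ⊗[k] H)))
                qh.assocInv)) := by rw [hinv, mul_one]
      _ = ((Algebra.TensorProduct.map (AlgHom.id k H)
            (Algebra.TensorProduct.map (AlgHom.id k H) qh.comul)) qh.assoc
          * (Algebra.TensorProduct.assoc k k k H H (H ⊗[k] H))
              ((Algebra.TensorProduct.map qh.comul (AlgHom.id k (H ⊗[k] H))) qh.assoc))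
          * (Algebra.TensorProduct.assoc k k k H H (H ⊗[k] H))
              ((Algebra.TensorProduct.map qh.comul (AlgHom.id k (H ⊗[k] H)))
                qh.assocInv) := (mul_assoc4 _ _ _).symm
      _ = ((1:H) ⊗ₜ[k] qh.assoc
          * (Algebra.TensorProduct.map (AlgHom.id k H)
              ((Algebra.TensorProduct.assoc k k k H H H).toAlgHom.comp
                (Algebra.TensorProduct.map qh.comul (AlgHom.id k H)))) qh.assoc
          * (Algebra.TensorProduct.map (AlgHom.id k H)
              (Algebra.TensorProduct.assoc k k k H H H).toAlgHom)
              ((Algebra.TensorProduct.assoc k k k H (H ⊗[k] H) H) (qh.assoc ⊗ₜ[k] (1:H))))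
          * (Algebra.TensorProduct.assoc k k k H H (H ⊗[k] H))
              ((Algebra.TensorProduct.map qh.comul (AlgHom.id k (H ⊗[k] H)))
                qh.assocInv) := by rw [qh.pentagon]
      _ = _ := by simp only [mul_assoc4]
  rw [hD3, ca, cb, cc, e1A_assocInv]

lemma core (h : H) :
    drinfeldCan qh (drinfeldInvAux qh h) = (1:H) ⊗ₜ[k] h := by
  rw [drinfeldInvAux_eq', cm, map_mul, Algebra.TensorProduct.map_tmul, map_one, chp,
    mextD3, mul_one]

lemma can_pull (g : H) (t : H ⊗[k] H) :
    drinfeldCan qh ((g ⊗ₜ[k] (1:H)) * t) = (g ⊗ₜ[k] (1:H)) * drinfeldCan qh t := by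
  induction t using TensorProduct.induction_on with
  | zero => rw [mul_zero, map_zero, mul_zero]
  | add u v hu hv => rw [mul_add, map_add, map_add, hu, hv, mul_add]
  | tmul p q =>
    rw [Algebra.TensorProduct.tmul_mul_tmul, one_mul, drinfeldCan_tmul, drinfeldCan_tmul,
      ← mul_assoc (g ⊗ₜ[k] (1:H)) (p ⊗ₜ[k] (1:H)), Algebra.TensorProduct.tmul_mul_tmul]
    simp only [mul_one]

lemma can_canInv (t : H ⊗[k] H) :
    drinfeldCan qh (drinfeldCanInv qh t) = t := by
  induction t using TensorProduct.induction_on with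
  | zero => rw [map_zero, map_zero]
  | add u v hu hv => rw [map_add, map_add, hu, hv]
  | tmul g h =>
    rw [drinfeldCanInv_tmul, can_pull, core, Algebra.TensorProduct.tmul_mul_tmul, mul_one,
      one_mul]

variable (ν : H →ₐ[k] Q) (comulQ : Q →ₐ[k] Q ⊗[k] Q)

lemma quotCan_tmul (p q : Q) :
    quotCan qh ν comulQ (p ⊗ₜ[k] q)
      = (p ⊗ₜ[k] (1:Q)) * ((Algebra.TensorProduct.map ν ν) (drinfeldW qh) * comulQ q) := by
  rw [quotCan]
  simp only [LinearMap.comp_apply, LinearMap.lTensor_tmul]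
  rw [← fold_mul]
  rfl

lemma nu_map_eq (z : H ⊗[k] H) :
    (Algebra.TensorProduct.map ν ν) z
      = TensorProduct.map ν.toLinearMap ν.toLinearMap z := by
  induction z using TensorProduct.induction_on with
  | zero => rw [map_zero, map_zero]
  | add u v hu hv => rw [map_add, map_add, hu, hv]
  | tmul a b => simp

lemma square (hcomul : ∀ h : H, comulQ (ν h) = (Algebra.TensorProduct.map ν ν) (qh.comul h)) :
    (Algebra.TensorProduct.map ν ν).toLinearMap ∘ₗ drinfeldCan qh
      = quotCan qh ν comulQ ∘ₗ (Algebra.TensorProduct.map ν ν).toLinearMap := by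
  apply TensorProduct.ext'
  intro g h
  simp only [LinearMap.comp_apply, AlgHom.toLinearMap_apply]
  rw [drinfeldCan_tmul, map_mul, map_mul]
  simp only [Algebra.TensorProduct.map_tmul, map_one]
  rw [quotCan_tmul, hcomul]

end Final

/-- For a finite-dimensional quotient quasibialgebra `Q = H/I` of a
quasi-Hopf algebra `H`, the map `φ̄` induced by Drinfeld's canonical map `φ` satisfies
`(ν⊗ν)∘φ = φ̄∘(ν⊗ν)`; consequently `φ̄` is surjective, hence bijective. -/
theorem quotCan_bijective (qh : QuasiHopf k H) (ν : H →ₐ[k] Q)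
    (hν : Function.Surjective ν) [FiniteDimensional k Q]
    (comulQ : Q →ₐ[k] Q ⊗[k] Q) (counitQ : Q →ₐ[k] k)
    (hcomul : ∀ h : H, comulQ (ν h) = (Algebra.TensorProduct.map ν ν) (qh.comul h))
    (hcounit : ∀ h : H, counitQ (ν h) = qh.counit h) :
    (Algebra.TensorProduct.map ν ν).toLinearMap ∘ₗ drinfeldCan qh
        = quotCan qh ν comulQ ∘ₗ (Algebra.TensorProduct.map ν ν).toLinearMap ∧
      Function.Surjective (quotCan qh ν comulQ) ∧
      Function.Bijective (quotCan qh ν comulQ) := by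
  have hsq := square qh ν comulQ hcomul
  have hmapsurj : Function.Surjective ⇑(Algebra.TensorProduct.map ν ν) := by
    intro y
    have hν' : Function.Surjective ⇑ν.toLinearMap := hν
    obtain ⟨s, hs⟩ := TensorProduct.map_surjective hν' hν' y
    exact ⟨s, by rw [nu_map_eq, hs]⟩
  have hsurj : Function.Surjective ⇑(quotCan qh ν comulQ) := by
    intro y
    obtain ⟨s, hs⟩ := hmapsurj y
    refine ⟨(Algebra.TensorProduct.map ν ν) (drinfeldCanInv qh s), ?_⟩
    have h1 := LinearMap.ext_iff.mp hsq (drinfeldCanInv qh s)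
    simp only [LinearMap.comp_apply, AlgHom.toLinearMap_apply] at h1
    rw [← h1, can_canInv, hs]
  exact ⟨hsq, hsurj, (LinearMap.injective_iff_surjective).mpr hsurj, hsurj⟩
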